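/- Let M ∈ R^{r×r} be positive semidefinite and nonzero. Define Φ_c(M) as the set of q ∈ R^r such that Mφ ≠ 0 for every generalized sign vector φ of q, and Λ(M) = {φ : φ is a generalized sign vector of some q ∈ Φ_c(M)}. If Φ_c(M) is nonempty, then inf_{φ ∈ Λ(M)} φ'Mφ > 0. -/

import Mathlib

open Matrix

def IsGenSign {r : ℕ} (x q : Fin r → ℝ) : Prop :=
  ∀ k, (0 < x k → q k = 1) ∧ (x k < 0 → q k = -1) ∧ (x k = 0 → |q k| ≤ 1)

namespace Stmt7Aux

/-- Compact fiber in `ℝ` for each sign. -/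
def C : SignType → Set ℝ
  | .pos => {1}
  | .neg => {-1}
  | .zero => Set.Icc (-1) 1

lemma C_compact (s : SignType) : IsCompact (C s) := by
  cases s <;> simp only [C] <;>
    first
      | exact isCompact_Icc
      | exact isCompact_singleton

/-- The set of generalized sign vectors with sign pattern `s`. -/
def Fs {r : ℕ} (s : Fin r → SignType) : Set (Fin r → ℝ) :=
  Set.univ.pi fun k => C (s k)

lemma Fs_compact {r : ℕ} (s : Fin r → SignType) : IsCompact (Fs s) :=
  isCompact_univ_pi fun k => C_compact (s k)

lemma isGenSign_iff {r : ℕ} (q φ : Fin r → ℝ) :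
    IsGenSign q φ ↔ φ ∈ Fs (fun k => SignType.sign (q k)) := by
  constructor
  · intro h k _
    rcases lt_trichotomy (q k) 0 with hk | hk | hk
    · simp [C, sign_neg hk, (h k).2.1 hk]
    · have := (h k).2.2 hk
      simp [C, hk, abs_le.mp this]
    · simp [C, sign_pos hk, (h k).1 hk]
  · intro h k
    have hk := h k (Set.mem_univ k)
    refine ⟨fun hp => ?_, fun hn => ?_, fun hz => ?_⟩
    · simpa [C, sign_pos hp] using hk
    · simpa [C, sign_neg hn] using hk
    · rw [abs_le]; simpa [C, hz] using hk

lemma sign_coe (s : SignType) : SignType.sign ((s : ℝ)) = s := by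
  cases s <;> norm_num

end Stmt7Aux

open Stmt7Aux in
/-- Let `M` be PSD and nonzero, `Φc(M)` the set of `q` such that `Mφ ≠ 0` for every
generalized sign vector `φ` of `q`, and `Λ(M)` the set of generalized sign vectors of
points of `Φc(M)`. If `Φc(M)` is nonempty then `inf_{φ ∈ Λ(M)} φ'Mφ > 0`. -/
theorem stmt_7 {r : ℕ} (M : Matrix (Fin r) (Fin r) ℝ)
    (hM : M.PosSemidef) (hM0 : M ≠ 0)
    (hne : ∃ q : Fin r → ℝ, ∀ φ, IsGenSign q φ → M.mulVec φ ≠ 0) :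
    ∃ c > (0:ℝ), ∀ φ : Fin r → ℝ,
      (∃ q, (∀ ψ, IsGenSign q ψ → M.mulVec ψ ≠ 0) ∧ IsGenSign q φ) →
      c ≤ ∑ k, φ k * M.mulVec φ k := by
  classical
  -- good sign patterns
  set G : Set (Fin r → SignType) := {s | ∀ ψ ∈ Fs s, M.mulVec ψ ≠ 0} with hG
  set Λ : Set (Fin r → ℝ) := ⋃ s ∈ G, Fs s with hΛ
  have hΛcompact : IsCompact Λ := by
    apply Set.Finite.isCompact_biUnion (Set.toFinite G)
    intro s _; exact Fs_compact s
  -- membership characterisation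
  have hmem : ∀ φ : Fin r → ℝ,
      (∃ q, (∀ ψ, IsGenSign q ψ → M.mulVec ψ ≠ 0) ∧ IsGenSign q φ) ↔ φ ∈ Λ := by
    intro φ
    constructor
    · rintro ⟨q, hq, hφ⟩
      refine Set.mem_iUnion₂.mpr ⟨fun k => SignType.sign (q k), ?_, ?_⟩
      · intro ψ hψ
        exact hq ψ ((isGenSign_iff q ψ).mpr hψ)
      · exact (isGenSign_iff q φ).mp hφ
    · intro hφ
      rcases Set.mem_iUnion₂.mp hφ with ⟨s, hs, hφs⟩
      refine ⟨fun k => (s k : ℝ), ?_, ?_⟩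
      · intro ψ hψ
        apply hs
        have := (isGenSign_iff (fun k => (s k : ℝ)) ψ).mp hψ
        simpa [sign_coe] using this
      · rw [isGenSign_iff]
        simpa [sign_coe] using hφs
  -- Λ is nonempty
  obtain ⟨q, hq⟩ := hne
  have hΛne : Λ.Nonempty := by
    refine ⟨fun k => ((SignType.sign (q k) : SignType) : ℝ), (hmem _).mp ⟨q, hq, ?_⟩⟩
    rw [isGenSign_iff]
    intro k _
    cases h : SignType.sign (q k) <;> simp [C, h]
  -- continuous quadratic form
  set f : (Fin r → ℝ) → ℝ := fun φ => ∑ k, φ k * M.mulVec φ k with hf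
  have hfcont : Continuous f := by
    apply continuous_finset_sum
    intro k _
    apply Continuous.mul (continuous_apply k)
    simp only [Matrix.mulVec, dotProduct]
    exact continuous_finset_sum _ fun j _ => (continuous_const.mul (continuous_apply j))
  obtain ⟨φ₀, hφ₀Λ, hmin⟩ := hΛcompact.exists_isMinOn hΛne hfcont.continuousOn
  have hpos : 0 < f φ₀ := by
    have hMφ₀ : M.mulVec φ₀ ≠ 0 := by
      rcases Set.mem_iUnion₂.mp hφ₀Λ with ⟨s, hs, hφs⟩
      exact hs φ₀ hφs
    have hdp : f φ₀ = star φ₀ ⬝ᵥ M.mulVec φ₀ := by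
      simp [hf, dotProduct]
    have hnonneg := hM.dotProduct_mulVec_nonneg φ₀
    have hne0 : star φ₀ ⬝ᵥ M.mulVec φ₀ ≠ 0 := by
      exact fun h => hMφ₀ ((hM.dotProduct_mulVec_zero_iff φ₀).mp h)
    rw [hdp]
    have : (0:ℝ) ≤ star φ₀ ⬝ᵥ M.mulVec φ₀ := by simpa using hnonneg
    exact lt_of_le_of_ne this (Ne.symm hne0)
  exact ⟨f φ₀, hpos, fun φ hφ => hmin ((hmem φ).mp hφ)⟩
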